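/- Let V be an n-dimensional vector space over an infinite field k, v ∈ V a nonzero vector, and S ⊂ k^× a finite subset. Then there exists f ∈ GL(V) with n distinct eigenvalues all lying in k^× \ S, with an eigenbasis v₁, …, v_n such that v = v₁ + ⋯ + v_n; in particular, v is not contained in any proper f-invariant subspace of V. -/

import Mathlib

/-- over an infinite field, for a nonzero vector `v` and a finite
set `S ⊆ k^×`, there is an automorphism with distinct eigenvalues avoiding `S`
and an eigenbasis summing to `v`; in particular `v` lies in no proper invariant
subspace. -/
theorem exists_automorphism_generic_eigenbasis {k V : Type*} [Field k] [Infinite k]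
    [AddCommGroup V] [Module k V] [FiniteDimensional k V] {n : ℕ}
    (hn : Module.finrank k V = n)
    (v : V) (hv : v ≠ 0) (S : Finset k) (hS : (0 : k) ∉ S) :
    ∃ (f : V ≃ₗ[k] V) (b : Module.Basis (Fin n) k V) (β : Fin n → k),
      Function.Injective β ∧ (∀ i, β i ≠ 0 ∧ β i ∉ S) ∧
      (∀ i, f (b i) = β i • b i) ∧ (v = ∑ i, b i) ∧
      (∀ W : Submodule k V, (∀ x ∈ W, f x ∈ W) → W ≠ ⊤ → v ∉ W) := by
  classical
  -- n ≠ 0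
  have hn0 : n ≠ 0 := by
    rintro rfl
    have : Subsingleton V := by
      rw [← Module.finrank_zero_iff (R := k)] at *; omega
    exact hv (Subsingleton.elim _ _)
  -- a basis
  let c : Module.Basis (Fin n) k V := (Module.finBasis k V).reindex (finCongr hn)
  obtain ⟨i0, hi0⟩ : ∃ i0, c.repr v i0 ≠ 0 := by
    by_contra h
    push_neg at h
    apply hv
    have : c.repr v = 0 := Finsupp.ext h
    simpa using congrArg c.repr.symm this
  set a : Fin n → k := fun i => c.repr v i with ha
  -- candidate family summing to v
  set b0 : Fin n → V := fun i =>
    if i = i0 then v - ∑ j ∈ Finset.univ.erase i0, c j else c i with hb0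
  have hb0sum : ∑ i, b0 i = v := by
    rw [← Finset.add_sum_erase _ _ (Finset.mem_univ i0)]
    have h1 : b0 i0 = v - ∑ j ∈ Finset.univ.erase i0, c j := by simp [hb0]
    have h2 : ∑ j ∈ Finset.univ.erase i0, b0 j = ∑ j ∈ Finset.univ.erase i0, c j := by
      apply Finset.sum_congr rfl
      intro j hj
      simp only [Finset.mem_erase] at hj
      simp [hb0, hj.1]
    rw [h1, h2]; abel
  have hvrepr : v = ∑ i, a i • c i := (c.sum_repr v).symm
  have hspan : ⊤ ≤ Submodule.span k (Set.range b0) := by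
    have hcW : ∀ i, c i ∈ Submodule.span k (Set.range b0) := by
      have hne : ∀ j, j ≠ i0 → c j ∈ Submodule.span k (Set.range b0) := by
        intro j hj
        have : c j = b0 j := by simp [hb0, hj]
        rw [this]; exact Submodule.subset_span ⟨j, rfl⟩
      have hvW : v ∈ Submodule.span k (Set.range b0) := by
        have : v = b0 i0 + ∑ j ∈ Finset.univ.erase i0, c j := by simp [hb0]
        rw [this]
        exact add_mem (Submodule.subset_span ⟨i0, rfl⟩)
          (Submodule.sum_mem _ fun j hj => hne j (Finset.mem_erase.1 hj).1)
      intro i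
      rcases eq_or_ne i i0 with h | hi
      · subst h
        have hv2 : v = a i • c i + ∑ j ∈ Finset.univ.erase i, a j • c j := by
          rw [hvrepr, ← Finset.add_sum_erase _ _ (Finset.mem_univ i)]
        have hkey : (a i)⁻¹ • (v - ∑ j ∈ Finset.univ.erase i, a j • c j) = c i := by
          rw [hv2, add_sub_cancel_right, smul_smul, inv_mul_cancel₀ hi0, one_smul]
        rw [← hkey]
        exact Submodule.smul_mem _ _ (sub_mem hvW (Submodule.sum_mem _ fun j hj =>
          Submodule.smul_mem _ _ (hne j (Finset.mem_erase.1 hj).1)))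
      · exact hne i hi
    rw [← c.span_eq]
    exact Submodule.span_le.2 (Set.range_subset_iff.2 hcW)
  have hcard : Fintype.card (Fin n) = Module.finrank k V := by simp [hn]
  let b : Module.Basis (Fin n) k V := basisOfTopLeSpanOfCardEqFinrank b0 hspan hcard
  have hb : ⇑b = b0 := coe_basisOfTopLeSpanOfCardEqFinrank b0 hspan hcard
  have hbsum : v = ∑ i, b i := by rw [hb, hb0sum]
  -- eigenvalues
  have hinf : ((↑(insert (0:k) S) : Set k)ᶜ).Infinite :=
    Set.Finite.infinite_compl (Finset.finite_toSet _)
  let emb := hinf.natEmbedding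
  set β : Fin n → k := fun i => emb (i : ℕ) with hβ
  have hβinj : Function.Injective β := fun i j h =>
    Fin.val_injective (emb.injective (Subtype.ext h))
  have hβprop : ∀ i, β i ≠ 0 ∧ β i ∉ S := by
    intro i
    have := (emb (i : ℕ)).2
    simp only [Set.mem_compl_iff, Finset.coe_insert, Set.mem_insert_iff,
      Finset.mem_coe, not_or] at this
    exact ⟨this.1, this.2⟩
  -- the automorphism
  let F : V →ₗ[k] V := b.constr k fun i => β i • b i
  let G : V →ₗ[k] V := b.constr k fun i => (β i)⁻¹ • b i
  have hFG : F.comp G = LinearMap.id := by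
    apply b.ext
    intro i
    simp [F, G, map_smul, b.constr_basis, smul_smul,
      mul_inv_cancel₀ (hβprop i).1, inv_mul_cancel₀ (hβprop i).1]
  have hGF : G.comp F = LinearMap.id := by
    apply b.ext
    intro i
    simp [F, G, map_smul, b.constr_basis, smul_smul,
      mul_inv_cancel₀ (hβprop i).1, inv_mul_cancel₀ (hβprop i).1]
  let f : V ≃ₗ[k] V := LinearEquiv.ofLinear F G hFG hGF
  have hfb : ∀ i, f (b i) = β i • b i := fun i => by
    simp [f, LinearEquiv.ofLinear_apply, F, b.constr_basis]
  refine ⟨f, b, β, hβinj, hβprop, hfb, hbsum, ?_⟩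
  -- invariant subspace part
  intro W hW hWtop hvW
  apply hWtop
  -- iterates
  have hFpow_b : ∀ (m : ℕ) (i), (F ^ m) (b i) = β i ^ m • b i := by
    intro m
    induction m with
    | zero => intro i; simp
    | succ m ih =>
      intro i
      have hFb : F (b i) = β i • b i := by simp [F, b.constr_basis]
      rw [pow_succ, Module.End.mul_apply, hFb, map_smul, ih, smul_smul, ← pow_succ']
  have hFpow_v : ∀ m : ℕ, (F ^ m) v = ∑ i, β i ^ m • b i := by
    intro m
    rw [hbsum, map_sum]
    exact Finset.sum_congr rfl fun i _ => hFpow_b m i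
  have hFpow_mem : ∀ m : ℕ, (F ^ m) v ∈ W := by
    intro m
    induction m with
    | zero => simpa using hvW
    | succ m ih =>
      rw [pow_succ', Module.End.mul_apply]
      have : F ((F ^ m) v) = f ((F ^ m) v) := rfl
      rw [this]
      exact hW _ ih
  -- Vandermonde
  set M : Matrix (Fin n) (Fin n) k := (Matrix.vandermonde β).transpose with hM
  have hdet : IsUnit M.det := by
    rw [hM, Matrix.det_transpose, Matrix.det_vandermonde]
    refine (Finset.prod_ne_zero_iff.2 fun i _ => Finset.prod_ne_zero_iff.2
      fun j hj => sub_ne_zero.2 fun h => ?_).isUnit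
    have := hβinj h
    rw [this] at hj
    simp at hj
  have hMinv : M⁻¹ * M = 1 := Matrix.nonsing_inv_mul M hdet
  have hbW : ∀ i, b i ∈ W := by
    intro i1
    have key : b i1 = ∑ j : Fin n, M⁻¹ i1 j • (F ^ (j : ℕ)) v := by
      have : ∀ j : Fin n, (F ^ (j : ℕ)) v = ∑ i, M j i • b i := by
        intro j
        rw [hFpow_v]
        exact Finset.sum_congr rfl fun i _ => by simp [hM, Matrix.vandermonde]
      calc b i1 = ∑ i, (1 : Matrix (Fin n) (Fin n) k) i1 i • b i := by
              simp [Matrix.one_apply]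
        _ = ∑ i, (M⁻¹ * M) i1 i • b i := by rw [hMinv]
        _ = ∑ i, (∑ j, M⁻¹ i1 j * M j i) • b i := by
              simp [Matrix.mul_apply]
        _ = ∑ i, ∑ j, (M⁻¹ i1 j * M j i) • b i := by
              simp [Finset.sum_smul]
        _ = ∑ j, ∑ i, (M⁻¹ i1 j * M j i) • b i := Finset.sum_comm
        _ = ∑ j : Fin n, M⁻¹ i1 j • (F ^ (j : ℕ)) v := by
              refine Finset.sum_congr rfl fun j _ => ?_
              rw [this j, Finset.smul_sum]
              exact Finset.sum_congr rfl fun i _ => by rw [smul_smul]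
    rw [key]
    exact Submodule.sum_mem _ fun j _ => Submodule.smul_mem _ _ (hFpow_mem j)
  rw [eq_top_iff, ← b.span_eq]
  exact Submodule.span_le.2 (Set.range_subset_iff.2 hbW)
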